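/- Assume r0 : [0,π] → ℝ satisfies (H1) and (H2). Define R̂(φ,ϕ,η) = (r0(φ) − r0(ϕ))² + 2·r0(φ)·r0(ϕ)·(1 − cos η) + (cos φ − cos ϕ)². Then there exists a constant C > 0 such that for all φ, ϕ ∈ (0,π) and η ∈ (0,2π): R̂(φ,ϕ,η) ≥ C·((φ − ϕ)² + (sin²φ + sin²ϕ)·sin²(η/2)). -/

import Mathlib

open Real Set Filter Topology

lemma aux_sin_lower {a t : ℝ} (ha : 0 < a) (haπ : a ≤ π / 2) (h1 : a ≤ t) (h2 : t ≤ π - a) :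
    Real.sin a ≤ Real.sin t := by
  rcases le_total t (π / 2) with h | h
  · exact Real.sin_le_sin_of_le_of_le_pi_div_two (by linarith [Real.pi_pos]) h h1
  · rw [← Real.sin_pi_sub t]
    exact Real.sin_le_sin_of_le_of_le_pi_div_two (by linarith [Real.pi_pos]) (by linarith)
      (by linarith)

lemma aux_sin_sub_sq {x y : ℝ} : (Real.sin x - Real.sin y) ^ 2 ≤ (x - y) ^ 2 := by
  rw [Real.sin_sub_sin]
  have h1 : Real.sin ((x - y) / 2) ^ 2 ≤ ((x - y) / 2) ^ 2 := Real.sin_sq_le_sq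
  have h2 : Real.cos ((x + y) / 2) ^ 2 ≤ 1 := Real.cos_sq_le_one _
  have h3 : (0:ℝ) ≤ Real.sin ((x - y) / 2) ^ 2 := sq_nonneg _
  have h4 : (0:ℝ) ≤ Real.cos ((x + y) / 2) ^ 2 := sq_nonneg _
  nlinarith [sq_nonneg ((x - y) / 2)]

lemma aux_deriv0 (r0 : ℝ → ℝ) (hdiff : DifferentiableOn ℝ r0 (Icc 0 π)) (h0 : r0 0 = 0)
    {C0 : ℝ} (hlow : ∀ φ ∈ Icc (0:ℝ) π, C0⁻¹ * Real.sin φ ≤ r0 φ) :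
    C0⁻¹ ≤ derivWithin r0 (Icc 0 π) 0 := by
  have hpi := Real.pi_pos
  have hd : HasDerivWithinAt r0 (derivWithin r0 (Icc 0 π) 0) (Icc 0 π) 0 :=
    (hdiff 0 ⟨le_refl 0, hpi.le⟩).hasDerivWithinAt
  rw [hasDerivWithinAt_iff_tendsto_slope] at hd
  have hsub : Ioo (0:ℝ) π ⊆ Icc 0 π \ {0} := fun x hx =>
    ⟨⟨hx.1.le, hx.2.le⟩, by simp [ne_of_gt hx.1]⟩
  haveI hne : (𝓝[Ioo (0:ℝ) π] 0).NeBot := by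
    rw [← mem_closure_iff_nhdsWithin_neBot, closure_Ioo hpi.ne]
    exact ⟨le_refl 0, hpi.le⟩
  have h1 : Tendsto (slope r0 0) (𝓝[Ioo (0:ℝ) π] 0) (𝓝 (derivWithin r0 (Icc 0 π) 0)) :=
    hd.mono_left (nhdsWithin_mono _ hsub)
  have hs : HasDerivAt Real.sin 1 0 := by simpa using Real.hasDerivAt_sin 0
  rw [hasDerivAt_iff_tendsto_slope] at hs
  have h2 : Tendsto (fun x => C0⁻¹ * slope Real.sin 0 x) (𝓝[Ioo (0:ℝ) π] 0) (𝓝 (C0⁻¹ * 1)) :=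
    (hs.mono_left (nhdsWithin_mono _ (fun x hx => by simp [ne_of_gt hx.1]))).const_mul _
  have key : C0⁻¹ * 1 ≤ derivWithin r0 (Icc 0 π) 0 := by
    refine le_of_tendsto_of_tendsto h2 h1 ?_
    filter_upwards [self_mem_nhdsWithin] with x hx
    have hx0 : (0:ℝ) < x := hx.1
    rw [slope_def_field, slope_def_field, h0, Real.sin_zero, sub_zero, sub_zero, sub_zero]
    rw [← mul_div_assoc, div_le_div_iff_of_pos_right hx0]
    exact hlow x ⟨hx.1.le, hx.2.le⟩
  linarith

lemma aux_derivpi (r0 : ℝ → ℝ) (hdiff : DifferentiableOn ℝ r0 (Icc 0 π)) (hπ : r0 π = 0)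
    {C0 : ℝ} (hlow : ∀ φ ∈ Icc (0:ℝ) π, C0⁻¹ * Real.sin φ ≤ r0 φ) :
    derivWithin r0 (Icc 0 π) π ≤ -C0⁻¹ := by
  have hpi := Real.pi_pos
  have hd : HasDerivWithinAt r0 (derivWithin r0 (Icc 0 π) π) (Icc 0 π) π :=
    (hdiff π ⟨hpi.le, le_refl π⟩).hasDerivWithinAt
  rw [hasDerivWithinAt_iff_tendsto_slope] at hd
  have hsub : Ioo (0:ℝ) π ⊆ Icc 0 π \ {π} := fun x hx =>
    ⟨⟨hx.1.le, hx.2.le⟩, by simp [ne_of_lt hx.2]⟩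
  haveI hne : (𝓝[Ioo (0:ℝ) π] π).NeBot := by
    rw [← mem_closure_iff_nhdsWithin_neBot, closure_Ioo hpi.ne]
    exact ⟨hpi.le, le_refl π⟩
  have h1 : Tendsto (slope r0 π) (𝓝[Ioo (0:ℝ) π] π) (𝓝 (derivWithin r0 (Icc 0 π) π)) :=
    hd.mono_left (nhdsWithin_mono _ hsub)
  have hs : HasDerivAt Real.sin (-1) π := by simpa using Real.hasDerivAt_sin π
  rw [hasDerivAt_iff_tendsto_slope] at hs
  have h2 : Tendsto (fun x => C0⁻¹ * slope Real.sin π x) (𝓝[Ioo (0:ℝ) π] π) (𝓝 (C0⁻¹ * (-1))) :=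
    (hs.mono_left (nhdsWithin_mono _ (fun x hx => by simp [ne_of_lt hx.2]))).const_mul _
  have key : derivWithin r0 (Icc 0 π) π ≤ C0⁻¹ * (-1) := by
    refine le_of_tendsto_of_tendsto h1 h2 ?_
    filter_upwards [self_mem_nhdsWithin] with x hx
    have hxπ : x - π < 0 := by linarith [hx.2]
    rw [slope_def_field, slope_def_field, hπ, Real.sin_pi, sub_zero, sub_zero]
    rw [← mul_div_assoc, div_le_div_right_of_neg hxπ]
    exact hlow x ⟨hx.1.le, hx.2.le⟩
  linarith


set_option maxHeartbeats 1000000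

/-- Assume `r0 : [0,π] → ℝ` satisfies (H1) and (H2), and set
`R̂(φ,ϕ,η) = (r0(φ) − r0(ϕ))² + 2 r0(φ) r0(ϕ)(1 − cos η) + (cos φ − cos ϕ)²`.
Then there is `C > 0` with
`R̂(φ,ϕ,η) ≥ C ((φ−ϕ)² + (sin²φ + sin²ϕ) sin²(η/2))` for all `φ, ϕ ∈ (0,π)`, `η ∈ (0,2π)`. -/
theorem stmt11 (r0 : ℝ → ℝ)
    (hC2 : ContDiffOn ℝ 2 r0 (Set.Icc 0 π))
    (h0 : r0 0 = 0) (hπ : r0 π = 0)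
    (hpos : ∀ φ ∈ Set.Ioo (0:ℝ) π, 0 < r0 φ)
    (C0 : ℝ) (hC0 : 0 < C0)
    (hH2 : ∀ φ ∈ Set.Icc (0:ℝ) π, C0⁻¹ * Real.sin φ ≤ r0 φ ∧ r0 φ ≤ C0 * Real.sin φ) :
    ∃ C > 0, ∀ φ ∈ Set.Ioo (0:ℝ) π, ∀ ϕ ∈ Set.Ioo (0:ℝ) π, ∀ η ∈ Set.Ioo (0:ℝ) (2*π),
      C * ((φ - ϕ) ^ 2 + (Real.sin φ ^ 2 + Real.sin ϕ ^ 2) * Real.sin (η / 2) ^ 2) ≤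
        (r0 φ - r0 ϕ) ^ 2 + 2 * r0 φ * r0 ϕ * (1 - Real.cos η)
          + (Real.cos φ - Real.cos ϕ) ^ 2 := by
  have hpi := Real.pi_pos
  have hlow : ∀ φ ∈ Icc (0:ℝ) π, C0⁻¹ * Real.sin φ ≤ r0 φ := fun φ hφ => (hH2 φ hφ).1
  have hdiff : DifferentiableOn ℝ r0 (Icc 0 π) := hC2.differentiableOn two_ne_zero
  set g := derivWithin r0 (Icc 0 π) with hgdef
  have hgcont : ContinuousOn g (Icc 0 π) :=
    hC2.continuousOn_derivWithin (uniqueDiffOn_Icc hpi) one_le_two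
  have hg0 : C0⁻¹ ≤ g 0 := aux_deriv0 r0 hdiff h0 hlow
  have hgπ : g π ≤ -C0⁻¹ := aux_derivpi r0 hdiff hπ hlow
  have hC0i : 0 < C0⁻¹ := inv_pos.2 hC0
  set m : ℝ := (2 * C0)⁻¹ with hmdef
  have hmeq : m = C0⁻¹ / 2 := by rw [hmdef, mul_inv]; ring
  have hmpos : 0 < m := by rw [hmeq]; positivity
  have hm2 : m < C0⁻¹ := by rw [hmeq]; linarith
  -- neighborhoods where the derivative is large
  have hev0 : {x | m < g x} ∈ 𝓝[Icc (0:ℝ) π] 0 :=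
    (hgcont 0 ⟨le_refl _, hpi.le⟩).eventually (eventually_gt_nhds (lt_of_lt_of_le hm2 hg0))
  have hevπ : {x | g x < -m} ∈ 𝓝[Icc (0:ℝ) π] π :=
    (hgcont π ⟨hpi.le, le_refl _⟩).eventually
      (eventually_lt_nhds (lt_of_le_of_lt hgπ (by linarith)))
  obtain ⟨ε₁, hε₁, hball1⟩ := Metric.mem_nhdsWithin_iff.1 hev0
  obtain ⟨ε₂, hε₂, hball2⟩ := Metric.mem_nhdsWithin_iff.1 hevπ
  set δ : ℝ := min (min ε₁ ε₂ / 2) (π / 4) with hδdef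
  have hδpos : 0 < δ := lt_min (by positivity) (by positivity)
  have hδπ4 : δ ≤ π / 4 := min_le_right _ _
  have hδε₁ : δ < ε₁ := lt_of_le_of_lt (min_le_left _ _) (by
    have := min_le_left ε₁ ε₂; linarith)
  have hδε₂ : δ < ε₂ := lt_of_le_of_lt (min_le_left _ _) (by
    have := min_le_right ε₁ ε₂; linarith)
  have P1 : ∀ x ∈ Icc (0:ℝ) δ, m < g x := by
    intro x hx
    refine hball1 ⟨?_, ⟨hx.1, le_trans hx.2 (by linarith)⟩⟩
    rw [Metric.mem_ball, Real.dist_eq, sub_zero, abs_of_nonneg hx.1]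
    linarith [hx.2]
  have P2 : ∀ x ∈ Icc (π - δ) π, g x < -m := by
    intro x hx
    refine hball2 ⟨?_, ⟨by linarith [hx.1], hx.2⟩⟩
    rw [Metric.mem_ball, Real.dist_eq, abs_of_nonpos (by linarith [hx.2])]
    linarith [hx.1]
  have hDA : ∀ x ∈ Ioo (0:ℝ) π, HasDerivAt r0 (g x) x := fun x hx =>
    ((hdiff x (Ioo_subset_Icc_self hx)).hasDerivWithinAt).hasDerivAt (Icc_mem_nhds hx.1 hx.2)
  -- quantitative MVT near 0
  have key1 : ∀ a b : ℝ, 0 ≤ a → b ≤ δ → a < b → m * (b - a) ≤ r0 b - r0 a := by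
    intro a b ha hb hab
    have hbπ : b ≤ π := le_trans hb (by linarith)
    obtain ⟨c, hc, hceq⟩ := exists_hasDerivAt_eq_slope r0 g hab
      (hC2.continuousOn.mono (Icc_subset_Icc ha hbπ))
      (fun x hx => hDA x ⟨lt_of_le_of_lt ha hx.1, lt_of_lt_of_le hx.2 (by linarith)⟩)
    have hgc : m < g c := P1 c ⟨le_trans ha hc.1.le, le_trans hc.2.le hb⟩
    have hba : (0:ℝ) < b - a := by linarith
    rw [eq_div_iff hba.ne'] at hceq
    have := mul_le_mul_of_nonneg_right hgc.le hba.le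
    linarith
  have key2 : ∀ a b : ℝ, π - δ ≤ a → b ≤ π → a < b → m * (b - a) ≤ r0 a - r0 b := by
    intro a b ha hb hab
    have haπ : 0 ≤ a := by linarith [hpi, hδπ4]
    obtain ⟨c, hc, hceq⟩ := exists_hasDerivAt_eq_slope r0 g hab
      (hC2.continuousOn.mono (Icc_subset_Icc haπ hb))
      (fun x hx => hDA x ⟨lt_of_le_of_lt haπ hx.1, lt_of_lt_of_le hx.2 hb⟩)
    have hgc : g c < -m := P2 c ⟨le_trans ha hc.1.le, le_trans hc.2.le hb⟩
    have hba : (0:ℝ) < b - a := by linarith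
    rw [eq_div_iff hba.ne'] at hceq
    have := mul_le_mul_of_nonneg_right hgc.le hba.le
    linarith
  -- squared versions
  have sq1 : ∀ a b : ℝ, 0 ≤ a → a ≤ δ → 0 ≤ b → b ≤ δ →
      m ^ 2 * (a - b) ^ 2 ≤ (r0 a - r0 b) ^ 2 := by
    intro a b ha1 ha2 hb1 hb2
    rcases lt_trichotomy a b with h | h | h
    · have hk := key1 a b ha1 hb2 h
      nlinarith [mul_self_le_mul_self (mul_nonneg hmpos.le (by linarith : (0:ℝ) ≤ b - a)) hk]
    · subst h; simp
    · have hk := key1 b a hb1 ha2 h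
      nlinarith [mul_self_le_mul_self (mul_nonneg hmpos.le (by linarith : (0:ℝ) ≤ a - b)) hk]
  have sq2 : ∀ a b : ℝ, π - δ ≤ a → a ≤ π → π - δ ≤ b → b ≤ π →
      m ^ 2 * (a - b) ^ 2 ≤ (r0 a - r0 b) ^ 2 := by
    intro a b ha1 ha2 hb1 hb2
    rcases lt_trichotomy a b with h | h | h
    · have hk := key2 a b ha1 hb2 h
      nlinarith [mul_self_le_mul_self (mul_nonneg hmpos.le (by linarith : (0:ℝ) ≤ b - a)) hk]
    · subst h; simp
    · have hk := key2 b a hb1 ha2 h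
      nlinarith [mul_self_le_mul_self (mul_nonneg hmpos.le (by linarith : (0:ℝ) ≤ a - b)) hk]
  -- constant for the "A" part
  have hδ2pos : 0 < δ / 2 := by linarith
  have hsinδ : 0 < Real.sin (δ / 2) :=
    Real.sin_pos_of_pos_of_lt_pi hδ2pos (by linarith)
  set c₁ : ℝ := min (m ^ 2) ((2 * Real.sin (δ / 2) / π) ^ 2) with hc₁def
  have hc₁pos : 0 < c₁ := lt_min (by positivity) (by positivity)
  have claimA : ∀ φ ∈ Ioo (0:ℝ) π, ∀ ϕ ∈ Ioo (0:ℝ) π,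
      c₁ * (φ - ϕ) ^ 2 ≤ (r0 φ - r0 ϕ) ^ 2 + (Real.cos φ - Real.cos ϕ) ^ 2 := by
    intro φ hφ ϕ hϕ
    rcases le_or_gt (δ / 2) ((φ + ϕ) / 2) with hmid | hmid
    · rcases le_or_gt ((φ + ϕ) / 2) (π - δ / 2) with hmid2 | hmid2
      · -- middle case : use the cosine term
        have hcs : Real.cos φ - Real.cos ϕ
            = -2 * Real.sin ((φ + ϕ) / 2) * Real.sin ((φ - ϕ) / 2) := Real.cos_sub_cos φ ϕ
        have hs1 : Real.sin (δ / 2) ≤ Real.sin ((φ + ϕ) / 2) :=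
          aux_sin_lower hδ2pos (by linarith) hmid hmid2
        have habs : 2 / π * |(φ - ϕ) / 2| ≤ |Real.sin ((φ - ϕ) / 2)| := by
          refine Real.mul_abs_le_abs_sin ?_
          rw [abs_le]
          constructor
          · linarith [hφ.2, hϕ.2, hφ.1, hϕ.1, Real.pi_pos]
          · linarith [hφ.2, hϕ.2, hφ.1, hϕ.1, Real.pi_pos]
        have hsq1 : (2 / π * |(φ - ϕ) / 2|) ^ 2 ≤ Real.sin ((φ - ϕ) / 2) ^ 2 := by
          have := pow_le_pow_left₀ (by positivity) habs 2
          rwa [sq_abs] at this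
        have hexp : (2 / π * |(φ - ϕ) / 2|) ^ 2 = (φ - ϕ) ^ 2 / π ^ 2 := by
          rw [mul_pow, sq_abs]
          field_simp
        have hsq2 : Real.sin (δ / 2) ^ 2 ≤ Real.sin ((φ + ϕ) / 2) ^ 2 :=
          pow_le_pow_left₀ hsinδ.le hs1 2
        have hprod : Real.sin (δ / 2) ^ 2 * ((φ - ϕ) ^ 2 / π ^ 2)
            ≤ Real.sin ((φ + ϕ) / 2) ^ 2 * Real.sin ((φ - ϕ) / 2) ^ 2 := by
          refine mul_le_mul hsq2 ?_ (by positivity) (sq_nonneg _)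
          rw [← hexp]; exact hsq1
        have hcs2 : (Real.cos φ - Real.cos ϕ) ^ 2
            = 4 * (Real.sin ((φ + ϕ) / 2) ^ 2 * Real.sin ((φ - ϕ) / 2) ^ 2) := by
          rw [hcs]; ring
        have hk : c₁ ≤ (2 * Real.sin (δ / 2) / π) ^ 2 := min_le_right _ _
        have hstep : c₁ * (φ - ϕ) ^ 2 ≤ (2 * Real.sin (δ / 2) / π) ^ 2 * (φ - ϕ) ^ 2 :=
          mul_le_mul_of_nonneg_right hk (sq_nonneg _)
        have heq2 : (2 * Real.sin (δ / 2) / π) ^ 2 * (φ - ϕ) ^ 2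
            = 4 * (Real.sin (δ / 2) ^ 2 * ((φ - ϕ) ^ 2 / π ^ 2)) := by
          field_simp; ring
        linarith [hstep, heq2, hprod, hcs2, sq_nonneg (r0 φ - r0 ϕ)]
      · -- both points near π
        have hφδ : π - δ < φ := by linarith [hϕ.2]
        have hϕδ : π - δ < ϕ := by linarith [hφ.2]
        have hk := sq2 φ ϕ hφδ.le hφ.2.le hϕδ.le hϕ.2.le
        have hc : c₁ ≤ m ^ 2 := min_le_left _ _
        have := mul_le_mul_of_nonneg_right hc (sq_nonneg (φ - ϕ))
        linarith [sq_nonneg (Real.cos φ - Real.cos ϕ)]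
    · -- both points near 0
      have hφδ : φ < δ := by linarith [hϕ.1]
      have hϕδ : ϕ < δ := by linarith [hφ.1]
      have hk := sq1 φ ϕ hφ.1.le hφδ.le hϕ.1.le hϕδ.le
      have hc : c₁ ≤ m ^ 2 := min_le_left _ _
      have := mul_le_mul_of_nonneg_right hc (sq_nonneg (φ - ϕ))
      linarith [sq_nonneg (Real.cos φ - Real.cos ϕ)]
  -- final constant
  refine ⟨min (c₁ / 2) (2 * C0⁻¹ ^ 2), lt_min (by linarith) (by positivity), ?_⟩
  intro φ hφ ϕ hϕ η hη
  set C : ℝ := min (c₁ / 2) (2 * C0⁻¹ ^ 2) with hCdef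
  have hCpos : 0 < C := lt_min (by linarith) (by positivity)
  have hCa : C ≤ c₁ / 2 := min_le_left _ _
  have hCb : C ≤ 2 * C0⁻¹ ^ 2 := min_le_right _ _
  set s : ℝ := Real.sin (η / 2) with hsdef
  have hcosη : 1 - Real.cos η = 2 * s ^ 2 := by
    have h := Real.sin_sq_eq_half_sub (η / 2)
    rw [show 2 * (η / 2) = η by ring] at h
    rw [hsdef]; linarith
  have hsφ : 0 < Real.sin φ := Real.sin_pos_of_pos_of_lt_pi hφ.1 hφ.2
  have hsϕ : 0 < Real.sin ϕ := Real.sin_pos_of_pos_of_lt_pi hϕ.1 hϕ.2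
  have hlφ : C0⁻¹ * Real.sin φ ≤ r0 φ := hlow φ ⟨hφ.1.le, hφ.2.le⟩
  have hlϕ : C0⁻¹ * Real.sin ϕ ≤ r0 ϕ := hlow ϕ ⟨hϕ.1.le, hϕ.2.le⟩
  have hmid : 4 * (C0⁻¹ ^ 2 * (Real.sin φ * Real.sin ϕ * s ^ 2))
      ≤ 2 * r0 φ * r0 ϕ * (1 - Real.cos η) := by
    have hprod : (C0⁻¹ * Real.sin φ) * (C0⁻¹ * Real.sin ϕ) ≤ r0 φ * r0 ϕ :=
      mul_le_mul hlφ hlϕ (by positivity) (le_trans (by positivity) hlφ)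
    have h2 := mul_le_mul_of_nonneg_right hprod (sq_nonneg s)
    rw [hcosη]
    linarith [h2]
  have hT : (Real.sin φ ^ 2 + Real.sin ϕ ^ 2) * s ^ 2
      ≤ 2 * (Real.sin φ * Real.sin ϕ * s ^ 2) + (φ - ϕ) ^ 2 := by
    have h1 : (Real.sin φ - Real.sin ϕ) ^ 2 ≤ (φ - ϕ) ^ 2 := aux_sin_sub_sq
    have h2 : s ^ 2 ≤ 1 := Real.sin_sq_le_one _
    nlinarith [mul_le_mul h1 h2 (sq_nonneg s) (sq_nonneg (φ - ϕ))]
  have hA := claimA φ hφ ϕ hϕ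
  have hPnn : (0:ℝ) ≤ Real.sin φ * Real.sin ϕ * s ^ 2 := by positivity
  calc C * ((φ - ϕ) ^ 2 + (Real.sin φ ^ 2 + Real.sin ϕ ^ 2) * s ^ 2)
      ≤ C * (2 * (φ - ϕ) ^ 2 + 2 * (Real.sin φ * Real.sin ϕ * s ^ 2)) := by
        apply mul_le_mul_of_nonneg_left _ hCpos.le
        linarith
    _ = (2 * C) * (φ - ϕ) ^ 2 + (2 * C) * (Real.sin φ * Real.sin ϕ * s ^ 2) := by ring
    _ ≤ c₁ * (φ - ϕ) ^ 2 + 4 * (C0⁻¹ ^ 2 * (Real.sin φ * Real.sin ϕ * s ^ 2)) := by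
        have e1 : (2 * C) * (φ - ϕ) ^ 2 ≤ c₁ * (φ - ϕ) ^ 2 :=
          mul_le_mul_of_nonneg_right (by linarith) (sq_nonneg _)
        have e2 : (2 * C) * (Real.sin φ * Real.sin ϕ * s ^ 2)
            ≤ (4 * C0⁻¹ ^ 2) * (Real.sin φ * Real.sin ϕ * s ^ 2) :=
          mul_le_mul_of_nonneg_right (by linarith) hPnn
        linarith [e1, e2]
    _ ≤ ((r0 φ - r0 ϕ) ^ 2 + (Real.cos φ - Real.cos ϕ) ^ 2)
          + 2 * r0 φ * r0 ϕ * (1 - Real.cos η) := add_le_add hA hmid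
    _ = (r0 φ - r0 ϕ) ^ 2 + 2 * r0 φ * r0 ϕ * (1 - Real.cos η)
          + (Real.cos φ - Real.cos ϕ) ^ 2 := by ring
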